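/- Let F = (ℝ^m; f_1, …, f_N) be an affine IFS that is non-antipodal with respect to a convex body K. Then F is hyperbolic: there exists a metric d on ℝ^m, Lipschitz equivalent to the Euclidean metric, and α ∈ [0,1), such that d(f_n(x), f_n(y)) ≤ α d(x,y) for all x,y and all n. In fact one may take d to be the Minkowski metric of the centrally symmetric convex body K − K. -/

import Mathlib

open scoped Pointwise

/-- The Minkowski gauge of a set `K`. -/
noncomputable def minkowskiGauge {m : ℕ} (K : Set (EuclideanSpace ℝ (Fin m)))
    (x : EuclideanSpace ℝ (Fin m)) : ℝ :=
  sInf {l : ℝ | 0 ≤ l ∧ x ∈ l • K}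

/-- `(p, q)` is an antipodal pair of the convex body `K`. -/
def IsAntipodalPair {m : ℕ} (K : Set (EuclideanSpace ℝ (Fin m)))
    (p q : EuclideanSpace ℝ (Fin m)) : Prop :=
  p ∈ frontier K ∧ q ∈ frontier K ∧
    ∃ u : EuclideanSpace ℝ (Fin m), ‖u‖ = 1 ∧
      (∀ x ∈ K, inner ℝ x u ≤ (inner ℝ p u : ℝ)) ∧
      (∀ x ∈ K, (inner ℝ q u : ℝ) ≤ inner ℝ x u)


open scoped RealInnerProductSpace Topology

lemma minkowskiGauge_eq_gauge {m : ℕ} {K : Set (EuclideanSpace ℝ (Fin m))} (hK : K.Nonempty)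
    (x : EuclideanSpace ℝ (Fin m)) : minkowskiGauge K x = gauge K x := by
  rcases eq_or_ne x 0 with rfl | hx
  · rw [gauge_zero]
    unfold minkowskiGauge
    have h0 : (0:ℝ) ∈ {l : ℝ | 0 ≤ l ∧ (0 : EuclideanSpace ℝ (Fin m)) ∈ l • K} := by
      refine ⟨le_refl 0, ?_⟩
      rw [Set.zero_smul_set hK]
      exact Set.zero_mem_zero
    exact le_antisymm (csInf_le ⟨0, fun l hl => hl.1⟩ h0) (le_csInf ⟨0, h0⟩ fun l hl => hl.1)
  · unfold minkowskiGauge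
    rw [gauge_def]
    congr 1
    ext l
    simp only [Set.mem_setOf_eq, Set.mem_sep_iff, Set.mem_Ioi]
    constructor
    · rintro ⟨hl, hxl⟩
      refine ⟨lt_of_le_of_ne hl ?_, hxl⟩
      rintro rfl
      rw [Set.zero_smul_set hK] at hxl
      exact hx (by simpa using hxl)
    · rintro ⟨hl, hxl⟩
      exact ⟨hl.le, hxl⟩

lemma exists_support {m : ℕ} {s : Set (EuclideanSpace ℝ (Fin m))} (hconv : Convex ℝ s)
    (hint : (interior s).Nonempty) {x : EuclideanSpace ℝ (Fin m)} (hx : x ∈ frontier s) :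
    ∃ u : EuclideanSpace ℝ (Fin m), ‖u‖ = 1 ∧ ∀ y ∈ s, ⟪y, u⟫ ≤ ⟪x, u⟫ := by
  obtain ⟨f, hf⟩ := geometric_hahn_banach_open_point hconv.interior isOpen_interior hx.2
  obtain ⟨a0, ha0⟩ := hint
  have hfa0 : f a0 < f x := hf a0 ha0
  -- f y ≤ f x for all y ∈ s
  have hle : ∀ y ∈ s, f y ≤ f x := by
    intro y hy
    by_contra h
    push_neg at h
    set t : ℝ := (f y - f x) / (f y - f a0) with ht
    have hda : f a0 < f y := lt_trans hfa0 h
    have htpos : 0 < t := div_pos (by linarith) (by linarith)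
    have htlt : t < 1 := by
      rw [div_lt_one (by linarith)]; linarith
    have hz : (1 - t) • y + t • a0 ∈ interior s := by
      refine hconv.combo_closure_interior_mem_interior (subset_closure hy) ha0 (by linarith) htpos
        (by ring)
    have := hf _ hz
    rw [map_add, map_smul, map_smul, smul_eq_mul, smul_eq_mul] at this
    have hd : f y - f a0 ≠ 0 := by linarith
    have hmul : t * (f y - f a0) = f y - f x := div_mul_cancel₀ _ hd
    have hfx : (1 - t) * f y + t * f a0 = f x := by nlinarith [hmul]
    linarith [hfx ▸ this]
  -- convert to inner product
  set z := (InnerProductSpace.toDual ℝ (EuclideanSpace ℝ (Fin m))).symm f with hzdef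
  have hzapp : ∀ y, ⟪y, z⟫ = f y := by
    intro y; rw [real_inner_comm]; exact InnerProductSpace.toDual_symm_apply
  have hz0 : z ≠ 0 := by
    intro h
    have : f = 0 := by
      have := (InnerProductSpace.toDual ℝ (EuclideanSpace ℝ (Fin m))).apply_symm_apply f
      rw [← hzdef, h, map_zero] at this
      exact this.symm
    rw [this] at hfa0
    simp at hfa0
  refine ⟨‖z‖⁻¹ • z, norm_smul_inv_norm hz0, fun y hy => ?_⟩
  rw [real_inner_smul_right, real_inner_smul_right, hzapp, hzapp]
  exact mul_le_mul_of_nonneg_left (hle y hy) (inv_nonneg.2 (norm_nonneg _))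

lemma antipodal_of_frontier {m : ℕ} {K : Set (EuclideanSpace ℝ (Fin m))} (hKc : IsCompact K)
    (hKint : (interior K).Nonempty) (hBconv : Convex ℝ (K - K))
    (hBint : (interior (K - K)).Nonempty)
    {p q : EuclideanSpace ℝ (Fin m)} (hp : p ∈ K) (hq : q ∈ K)
    (hfr : p - q ∈ frontier (K - K)) : IsAntipodalPair K p q := by
  obtain ⟨u, hu1, hsupp⟩ := exists_support hBconv hBint hfr
  have hmax : ∀ x ∈ K, ⟪x, u⟫ ≤ ⟪p, u⟫ := by
    intro x hx
    have := hsupp _ (Set.sub_mem_sub hx hq)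
    rw [inner_sub_left, inner_sub_left] at this
    linarith
  have hmin : ∀ x ∈ K, ⟪q, u⟫ ≤ ⟪x, u⟫ := by
    intro x hx
    have := hsupp _ (Set.sub_mem_sub hp hx)
    rw [inner_sub_left, inner_sub_left] at this
    linarith
  have huu : ⟪u, u⟫ = 1 := by
    rw [real_inner_self_eq_norm_sq, hu1]; norm_num
  have hpf : p ∈ frontier K := by
    rw [frontier, hKc.isClosed.closure_eq]
    refine ⟨hp, fun hpin => ?_⟩
    obtain ⟨ε, hε, hball⟩ := Metric.mem_nhds_iff.1 (mem_interior_iff_mem_nhds.1 hpin)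
    have hxK : p + (ε / 2) • u ∈ K := by
      apply hball
      rw [Metric.mem_ball, dist_eq_norm]
      simp only [add_sub_cancel_left, norm_smul, hu1]
      rw [Real.norm_eq_abs, abs_of_pos (by linarith), mul_one]
      linarith
    have := hmax _ hxK
    rw [inner_add_left, real_inner_smul_left, huu] at this
    linarith
  have hqf : q ∈ frontier K := by
    rw [frontier, hKc.isClosed.closure_eq]
    refine ⟨hq, fun hqin => ?_⟩
    obtain ⟨ε, hε, hball⟩ := Metric.mem_nhds_iff.1 (mem_interior_iff_mem_nhds.1 hqin)
    have hxK : q - (ε / 2) • u ∈ K := by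
      apply hball
      rw [Metric.mem_ball, dist_eq_norm]
      simp only [sub_sub_cancel_left, norm_neg, norm_smul, hu1]
      rw [Real.norm_eq_abs, abs_of_pos (by linarith), mul_one]
      linarith
    have := hmin _ hxK
    rw [inner_sub_left, real_inner_smul_left, huu] at this
    linarith
  exact ⟨hpf, hqf, u, hu1, hmax, hmin⟩

theorem non_antipodal_implies_hyperbolic (m N : ℕ)
    (f : Fin N → EuclideanSpace ℝ (Fin m) → EuclideanSpace ℝ (Fin m))
    (hf_affine : ∀ n, ∃ g : EuclideanSpace ℝ (Fin m) →ᵃ[ℝ] EuclideanSpace ℝ (Fin m),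
      f n = g)
    (K : Set (EuclideanSpace ℝ (Fin m)))
    (hKc : IsCompact K) (hKconv : Convex ℝ K) (hKint : (interior K).Nonempty)
    (hinv : ∀ n, f n '' K ⊆ K)
    (hna : ∀ n, ∀ x y, IsAntipodalPair K x y → ¬ IsAntipodalPair K (f n x) (f n y)) :
    (∃ r R : ℝ, 0 < r ∧ r ≤ R ∧ ∀ x y : EuclideanSpace ℝ (Fin m),
        r * dist x y ≤ minkowskiGauge (K - K) (x - y) ∧
        minkowskiGauge (K - K) (x - y) ≤ R * dist x y) ∧
    ∃ α : ℝ, 0 ≤ α ∧ α < 1 ∧ ∀ (n : Fin N) (x y : EuclideanSpace ℝ (Fin m)),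
      minkowskiGauge (K - K) (f n x - f n y) ≤ α * minkowskiGauge (K - K) (x - y) := by
  obtain ⟨a0, ha0⟩ := hKint
  have ha0K : a0 ∈ K := interior_subset ha0
  set B := K - K with hBdef
  have hBne : B.Nonempty := ⟨a0 - a0, Set.sub_mem_sub ha0K ha0K⟩
  have hmg : ∀ x : EuclideanSpace ℝ (Fin m), minkowskiGauge B x = gauge B x := minkowskiGauge_eq_gauge hBne
  have hBconv : Convex ℝ B := hKconv.sub hKconv
  have hBc : IsCompact B := by rw [hBdef, sub_eq_add_neg]; exact hKc.add hKc.neg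
  have hBclosed : IsClosed B := hBc.isClosed
  -- B is a neighborhood of 0
  have hB0 : B ∈ 𝓝 (0 : EuclideanSpace ℝ (Fin m)) := by
    have hcont : Continuous (fun y : EuclideanSpace ℝ (Fin m) => y + a0) := continuous_id.add continuous_const
    have hpre : (fun y : EuclideanSpace ℝ (Fin m) => y + a0) ⁻¹' interior K ∈ 𝓝 (0 : EuclideanSpace ℝ (Fin m)) := by
      apply hcont.continuousAt.preimage_mem_nhds
      rw [zero_add]
      exact isOpen_interior.mem_nhds ha0
    refine Filter.mem_of_superset hpre fun y hy => ?_
    have : (y + a0) - a0 = y := by abel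
    exact this ▸ Set.sub_mem_sub (interior_subset hy) ha0K
  have hBabs : Absorbent ℝ B := absorbent_nhds_zero hB0
  have hBint : (interior B).Nonempty := ⟨0, mem_interior_iff_mem_nhds.2 hB0⟩
  -- bounds
  obtain ⟨ε, hε, hball⟩ := Metric.mem_nhds_iff.1 hB0
  obtain ⟨R0, hR0⟩ := hBc.isBounded.subset_closedBall 0
  set R1 : ℝ := max R0 ε with hR1def
  have hR1pos : 0 < R1 := lt_of_lt_of_le hε (le_max_right _ _)
  have hR1 : B ⊆ Metric.closedBall 0 R1 := hR0.trans
    (Metric.closedBall_subset_closedBall (le_max_left _ _))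
  have hlow : ∀ v : EuclideanSpace ℝ (Fin m), R1⁻¹ * ‖v‖ ≤ gauge B v := by
    intro v
    have := le_gauge_of_subset_closedBall hBabs hR1pos.le hR1 (x := v)
    rwa [div_eq_inv_mul] at this
  have hup : ∀ v : EuclideanSpace ℝ (Fin m), gauge B v ≤ ε⁻¹ * ‖v‖ := by
    intro v
    have h1 : gauge B v ≤ gauge (Metric.ball (0: EuclideanSpace ℝ (Fin m)) ε) v :=
      gauge_mono (absorbent_nhds_zero (Metric.ball_mem_nhds 0 hε)) hball v
    rw [gauge_ball hε.le] at h1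
    rwa [div_eq_inv_mul] at h1
  constructor
  · refine ⟨R1⁻¹, ε⁻¹, inv_pos.2 hR1pos, ?_, fun x y => ?_⟩
    · exact inv_anti₀ hε (le_max_right _ _)
    · rw [hmg, dist_eq_norm]
      exact ⟨hlow _, hup _⟩
  -- Part 2
  · rcases eq_or_ne m 0 with rfl | hm
    · refine ⟨0, le_refl _, one_pos, fun n x y => ?_⟩
      have hx0 : f n x - f n y = 0 := Subsingleton.elim _ _
      have hx1 : x - y = 0 := Subsingleton.elim _ _
      rw [hx0, hx1, hmg, gauge_zero]
      simp
    rcases eq_or_ne N 0 with rfl | hN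
    · exact ⟨0, le_refl _, one_pos, fun n => n.elim0⟩
    -- linear parts
    choose g hg using hf_affine
    set L : Fin N → EuclideanSpace ℝ (Fin m) →ₗ[ℝ] EuclideanSpace ℝ (Fin m) := fun n => (g n).linear with hLdef
    have hL : ∀ n x y, f n x - f n y = L n (x - y) := by
      intro n x y
      rw [hg n]
      exact ((g n).linearMap_vsub x y).symm
    have hLB : ∀ n, ∀ v ∈ B, L n v ∈ B := by
      intro n v hv
      obtain ⟨p, hp, q, hq, rfl⟩ := Set.mem_sub.1 hv
      rw [← hL]
      exact Set.sub_mem_sub (hinv n ⟨p, hp, rfl⟩) (hinv n ⟨q, hq, rfl⟩)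
    have hstrict : ∀ n, ∀ v ∈ frontier B, gauge B (L n v) < 1 := by
      intro n v hv
      have hvB : v ∈ B := hBclosed.closure_eq ▸ hv.1
      obtain ⟨p, hp, q, hq, rfl⟩ := Set.mem_sub.1 hvB
      have h1 : IsAntipodalPair K p q := antipodal_of_frontier hKc ⟨a0, ha0⟩ hBconv hBint hp hq hv
      have hLmem : L n (p - q) ∈ B := hLB n _ hvB
      have hnf : L n (p - q) ∉ frontier B := by
        intro hfr2
        rw [← hL] at hfr2
        exact hna n p q h1 (antipodal_of_frontier hKc ⟨a0, ha0⟩ hBconv hBint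
          (hinv n ⟨p, hp, rfl⟩) (hinv n ⟨q, hq, rfl⟩) hfr2)
      exact lt_of_le_of_ne (gauge_le_one_of_mem hLmem)
        (fun h => hnf ((gauge_eq_one_iff_mem_frontier hBconv hB0).1 h))
    -- sphere
    have hv0 : (EuclideanSpace.single (⟨0, Nat.pos_of_ne_zero hm⟩ : Fin m) (1:ℝ)) ∈
        Metric.sphere (0 : EuclideanSpace ℝ (Fin m)) 1 := by
      rw [mem_sphere_zero_iff_norm, EuclideanSpace.norm_single]
      norm_num
    have hgpos : ∀ v ∈ Metric.sphere (0 : EuclideanSpace ℝ (Fin m)) 1, 0 < gauge B v := by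
      intro v hv
      have := hlow v
      rw [mem_sphere_zero_iff_norm.1 hv, mul_one] at this
      exact lt_of_lt_of_le (inv_pos.2 hR1pos) this
    have hgc : Continuous (gauge B) := continuous_gauge hBconv hB0
    have key : ∀ n : Fin N, ∃ a : ℝ, 0 ≤ a ∧ a < 1 ∧
        ∀ x y : EuclideanSpace ℝ (Fin m), gauge B (L n (x - y)) ≤ a * gauge B (x - y) := by
      intro n
      have hLc : Continuous (L n) := (L n).continuous_of_finiteDimensional
      have hcont : ContinuousOn (fun v : EuclideanSpace ℝ (Fin m) => gauge B (L n v) / gauge B v)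
          (Metric.sphere 0 1) := by
        apply ContinuousOn.div
        · exact (hgc.comp hLc).continuousOn
        · exact hgc.continuousOn
        · exact fun v hv => (hgpos v hv).ne'
      obtain ⟨w, hwS, hwmax⟩ := (isCompact_sphere (0: EuclideanSpace ℝ (Fin m)) 1).exists_isMaxOn ⟨_, hv0⟩ hcont
      set a : ℝ := gauge B (L n w) / gauge B w with hadef
      have hwpos : 0 < gauge B w := hgpos w hwS
      have ha0' : 0 ≤ a := div_nonneg (gauge_nonneg _) (gauge_nonneg _)
      have ha1 : a < 1 := by
        set c := gauge B w with hcdef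
        have hw1 : gauge B (c⁻¹ • w) = 1 := by
          rw [gauge_smul_of_nonneg (inv_nonneg.2 hwpos.le), smul_eq_mul, ← hcdef,
            inv_mul_cancel₀ hwpos.ne']
        have hwf : c⁻¹ • w ∈ frontier B := (gauge_eq_one_iff_mem_frontier hBconv hB0).1 hw1
        have := hstrict n _ hwf
        rw [map_smul, gauge_smul_of_nonneg (inv_nonneg.2 hwpos.le), smul_eq_mul] at this
        rw [hadef, div_lt_one hwpos]
        calc gauge B (L n w) = c * (c⁻¹ * gauge B (L n w)) := by
              field_simp
          _ < c * 1 := by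
              exact mul_lt_mul_of_pos_left this hwpos
          _ = c := mul_one c
      refine ⟨a, ha0', ha1, fun x y => ?_⟩
      rcases eq_or_ne (x - y) 0 with h0 | h0
      · rw [h0, map_zero, gauge_zero]
        simp
      set v := x - y with hvdef
      set vh : EuclideanSpace ℝ (Fin m) := ‖v‖⁻¹ • v with hvh
      have hvhS : vh ∈ Metric.sphere (0 : EuclideanSpace ℝ (Fin m)) 1 := by
        rw [mem_sphere_zero_iff_norm]
        exact norm_smul_inv_norm h0
      have hr : gauge B (L n vh) / gauge B vh ≤ a := hwmax hvhS
      have hvhpos : 0 < gauge B vh := hgpos _ hvhS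
      have hineq : gauge B (L n vh) ≤ a * gauge B vh := (div_le_iff₀ hvhpos).1 hr
      have hn0 : ‖v‖ ≠ 0 := norm_ne_zero_iff.2 h0
      have e1 : gauge B vh = ‖v‖⁻¹ * gauge B v := by
        rw [hvh, gauge_smul_of_nonneg (inv_nonneg.2 (norm_nonneg _)), smul_eq_mul]
      have e2 : gauge B ((L n) vh) = ‖v‖⁻¹ * gauge B ((L n) v) := by
        rw [hvh, map_smul, gauge_smul_of_nonneg (inv_nonneg.2 (norm_nonneg _)), smul_eq_mul]
      rw [e1, e2] at hineq
      have hmul := mul_le_mul_of_nonneg_left hineq (norm_nonneg v)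
      calc gauge B ((L n) v) = ‖v‖ * (‖v‖⁻¹ * gauge B ((L n) v)) := by field_simp
        _ ≤ ‖v‖ * (a * (‖v‖⁻¹ * gauge B v)) := hmul
        _ = a * (‖v‖ * ‖v‖⁻¹ * gauge B v) := by ring
        _ = a * gauge B v := by rw [mul_inv_cancel₀ hn0, one_mul]
    choose A hA using key
    have hNE : Nonempty (Fin N) := ⟨⟨0, Nat.pos_of_ne_zero hN⟩⟩
    set α : ℝ := Finset.univ.sup' Finset.univ_nonempty A with hα
    have hle : ∀ n, A n ≤ α := fun n => Finset.le_sup' A (Finset.mem_univ n)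
    refine ⟨α, le_trans (hA hNE.some).1 (hle _), ?_, fun n x y => ?_⟩
    · exact (Finset.sup'_lt_iff Finset.univ_nonempty).2 fun n _ => (hA n).2.1
    · simp only [hmg]
      rw [hL]
      calc gauge B (L n (x - y)) ≤ A n * gauge B (x - y) := (hA n).2.2 x y
        _ ≤ α * gauge B (x - y) := mul_le_mul_of_nonneg_right (hle n) (gauge_nonneg _)
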